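/- arXiv:0807.3406 — 2 statements merged into one kernel-verified Lean document; each statement's English description precedes it below -/
import Mathlib

section
/- If u and v are non-empty prefixes of a uniformly recurrent sequence X with u a prefix of v, then every return word on v is a concatenation of return words on u. -/
namespace Cobham

open Filter

variable {A : Type*} {B : Type*}

/-- The factor `X_i X_{i+1} ... X_{i+n-1}` of the sequence `X`. -/
def word (X : ℕ → A) (i n : ℕ) : List A := (List.range n).map fun k => X (i + k)

/-- `u` occurs in `X` at position `i`. -/
def OccursAt (X : ℕ → A) (u : List A) (i : ℕ) : Prop := word X i u.length = u

def IsFactor (X : ℕ → A) (u : List A) : Prop := ∃ i, OccursAt X u i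

def IsPrefix (X : ℕ → A) (u : List A) : Prop := OccursAt X u 0

/-- Uniformly recurrent: gaps between successive occurrences of any factor are bounded. -/
def UnifRec (X : ℕ → A) : Prop :=
  ∀ u, IsFactor X u → ∃ g : ℕ, ∀ i : ℕ, ∃ j, i ≤ j ∧ j ≤ i + g ∧ OccursAt X u j

/-- Return words on `u`: factors between two successive occurrences of `u` in `X`. -/
def ReturnWords (X : ℕ → A) (u : List A) : Set (List A) :=
  { v | ∃ i j, OccursAt X u i ∧ OccursAt X u j ∧ i < j ∧
      (∀ k, i < k → k < j → ¬ OccursAt X u k) ∧ v = word X i (j - i) }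

/-- Application of a morphism to a word, by concatenation. -/
def wordApply (σ : A → List B) (w : List A) : List B := w.flatMap σ

/-- Iterate of a morphism. -/
def mPow (σ : A → List A) : ℕ → A → List A
  | 0 => fun a => [a]
  | k + 1 => fun a => wordApply σ (mPow σ k a)

def Nonerasing (σ : A → List A) : Prop := ∀ a, σ a ≠ []

/-- Primitivity: some power of the morphism maps every letter to a word
containing every letter. -/
def Primitive (σ : A → List A) : Prop := ∃ k, 0 < k ∧ ∀ a b : A, b ∈ mPow σ k a

/-- Primitivity restricted to a set of letters. -/
def PrimitiveOn (σ : A → List A) (S : Set A) : Prop :=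
  ∃ k, 0 < k ∧ ∀ a ∈ S, ∀ b ∈ S, b ∈ mPow σ k a

/-- `X` is a fixed point of `σ`: the image of every prefix of `X` is a prefix of `X`. -/
def IsFixedPt (σ : A → List A) (X : ℕ → A) : Prop :=
  ∀ n, OccursAt X (wordApply σ (word X 0 n)) 0

def UltPeriodic (X : ℕ → A) : Prop :=
  ∃ N p : ℕ, 0 < p ∧ ∀ n, N ≤ n → X (n + p) = X n

def Periodic (X : ℕ → A) : Prop := ∃ p : ℕ, 0 < p ∧ ∀ n, X (n + p) = X n

/-- `u` occurs at position `i` inside the word `w`. -/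
def WOcc (u w : List A) (i : ℕ) : Prop :=
  i + u.length ≤ w.length ∧ (w.drop i).take u.length = u

/-- `D` is the derived sequence of `X` on `u`: a sequence of return words on `u`
whose concatenation is `X`. -/
def IsDerived (X : ℕ → A) (u : List A) (D : ℕ → List A) : Prop :=
  (∀ n, D n ∈ ReturnWords X u) ∧ ∀ n, OccursAt X ((word D 0 n).flatten) 0

/-- `τu` is the return substitution of `τ` on `u` (on the alphabet of return words):
`Θ_u ∘ τ_u = τ ∘ Θ_u`. -/
def RetSub (τ : A → List A) (X : ℕ → A) (u : List A)
    (τu : List A → List (List A)) : Prop :=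
  ∀ r ∈ ReturnWords X u,
    (∀ s ∈ τu r, s ∈ ReturnWords X u) ∧ (τu r).flatten = wordApply τ r

/-- Eigenvalue of a complex matrix. -/
def IsEig {n : Type*} [Fintype n] (M : Matrix n n ℂ) (μ : ℂ) : Prop :=
  ∃ v : n → ℂ, v ≠ 0 ∧ M.mulVec v = μ • v

/-- Incidence matrix of a morphism, as a complex matrix. -/
def incMat [Fintype A] [DecidableEq A] (σ : A → List A) : Matrix A A ℂ :=
  Matrix.of fun i j => (((σ j).count i : ℕ) : ℂ)

/-- Incidence matrix of a return substitution, indexed by the set of return words. -/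
def retMat [DecidableEq A] (τu : List A → List (List A)) (S : Set (List A))
    [Fintype S] : Matrix S S ℂ :=
  Matrix.of fun i j => (((τu (j : List A)).count (i : List A) : ℕ) : ℂ)

/-- `α` is the dominant eigenvalue of the incidence matrix of `σ`. -/
def IsDomEig [Fintype A] [DecidableEq A] (σ : A → List A) (α : ℝ) : Prop :=
  IsEig (incMat σ) (α : ℂ) ∧ ∀ μ : ℂ, IsEig (incMat σ) μ → ‖μ‖ ≤ α

/-- `X` is `α`-substitutive: the image under a letter-to-letter morphism of the
fixed point of a primitive substitution with dominant eigenvalue `α`. -/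
def IsSubstitutiveWith {A : Type*} (α : ℝ) (X : ℕ → A) : Prop :=
  ∃ (C : Type) (hF : Fintype C) (hD : DecidableEq C) (σ : C → List C) (c : C)
    (Y : ℕ → C) (ψ : C → A),
    Nonerasing σ ∧ (σ c).head? = some c ∧ Primitive σ ∧
    Y 0 = c ∧ IsFixedPt σ Y ∧ (∀ n, X n = ψ (Y n)) ∧ @IsDomEig C hF hD σ α

/-- Perron number: a real algebraic integer `α ≥ 1` strictly dominating the
absolute values of its other conjugates. -/
def IsPerron (α : ℝ) : Prop :=
  1 ≤ α ∧ IsIntegral ℤ α ∧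
    ∀ β : ℂ, Polynomial.aeval β (minpoly ℤ α) = 0 → β ≠ (α : ℂ) → ‖β‖ < α

lemma word_append (X : ℕ → A) (i a b : ℕ) :
    word X i a ++ word X (i + a) b = word X i (a + b) := by
  simp only [word, List.range_add, List.map_append, List.map_map]
  congr 1
  apply List.map_congr_left
  intro k _
  simp [Function.comp]; ring

lemma occursAt_of_prefix {X : ℕ → A} {u v : List A} (huv : u <+: v) {i : ℕ}
    (h : OccursAt X v i) : OccursAt X u i := by
  obtain ⟨t, ht⟩ := huv
  have hlen : u.length ≤ v.length := by
    rw [← ht]; simp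
  have : word X i u.length = (word X i v.length).take u.length := by
    simp only [word, ← List.map_take, List.take_range, hlen, min_eq_left]
  rw [OccursAt] at h ⊢
  rw [this, h, ← ht, List.take_left]

lemma stmt3_aux {X : ℕ → A} {u : List A} :
    ∀ d i j, j - i ≤ d → i < j → OccursAt X u i → OccursAt X u j →
      ∃ l : List (List A), (∀ w ∈ l, w ∈ ReturnWords X u) ∧
        l.flatten = word X i (j - i) := by
  intro d
  induction d with
  | zero => intro i j hd hij _ _; omega
  | succ d ih =>
    intro i j hd hij hoi hoj
    by_cases hmid : ∃ k, i < k ∧ k < j ∧ OccursAt X u k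
    · obtain ⟨k, hik, hkj, hok⟩ := hmid
      obtain ⟨l1, hl1, hf1⟩ := ih i k (by omega) hik hoi hok
      obtain ⟨l2, hl2, hf2⟩ := ih k j (by omega) hkj hok hoj
      refine ⟨l1 ++ l2, ?_, ?_⟩
      · intro w hw
        rcases List.mem_append.mp hw with h | h
        · exact hl1 w h
        · exact hl2 w h
      · rw [List.flatten_append, hf1, hf2]
        have h := word_append X i (k - i) (j - k)
        rw [show i + (k - i) = k by omega] at h
        rw [h]; congr 1; omega
    · refine ⟨[word X i (j - i)], ?_, by simp⟩
      intro w hw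
      simp only [List.mem_singleton] at hw
      subst hw
      exact ⟨i, j, hoi, hoj, hij, fun k h1 h2 hk => hmid ⟨k, h1, h2, hk⟩, rfl⟩

theorem stmt3 {A : Type*} (X : ℕ → A) (u v : List A)
    (hX : UnifRec X) (hu : u ≠ []) (hv : v ≠ [])
    (hpu : IsPrefix X u) (hpv : IsPrefix X v) (huv : u <+: v) :
    ∀ r ∈ ReturnWords X v,
      ∃ l : List (List A), (∀ w ∈ l, w ∈ ReturnWords X u) ∧ l.flatten = r := by
  rintro r ⟨i, j, hoi, hoj, hij, _, rfl⟩
  exact stmt3_aux (j - i) i j le_rfl hij (occursAt_of_prefix huv hoi)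
    (occursAt_of_prefix huv hoj)

end Cobham
end

section
/- If X is a non-periodic uniformly recurrent sequence, then the minimal length of a return word on the prefix X[0..n] tends to infinity as n tends to infinity. -/
namespace Cobham

open Filter

variable {A : Type*} {B : Type*}

lemma word_length_aux (X : ℕ → A) (i n : ℕ) : (word X i n).length = n := by
  simp [word]

lemma word_eq_apply_aux {X : ℕ → A} {i j n : ℕ} (h : word X i n = word X j n)
    {k : ℕ} (hk : k < n) : X (i + k) = X (j + k) := by
  have := congrArg (fun l => l[k]?) h
  simpa [word, List.getElem?_map, List.getElem?_range, hk] using this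

theorem stmt4 {A : Type*} (X : ℕ → A)
    (hX : UnifRec X) (hnp : ¬ UltPeriodic X) :
    Tendsto (fun n => sInf (List.length '' ReturnWords X (word X 0 (n + 1))))
      atTop atTop := by
  rw [tendsto_atTop]
  intro L
  rw [eventually_atTop]
  unfold UltPeriodic at hnp
  push_neg at hnp
  -- choose witnesses to non-periodicity
  have hch : ∀ d : ℕ, 0 < d → ∃ m, X (m + d) ≠ X m := by
    intro d hd
    obtain ⟨m, _, hm⟩ := hnp 0 d hd
    exact ⟨m, hm⟩
  classical
  set f : ℕ → ℕ := fun d => if h : 0 < d then (hch d h).choose else 0 with hf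
  have hfprop : ∀ d : ℕ, 0 < d → X (f d + d) ≠ X (f d) := by
    intro d hd
    simp only [hf, dif_pos hd]
    exact (hch d hd).choose_spec
  refine ⟨(Finset.range (L + 1)).sup (fun d => f d + d), fun n hn => ?_⟩
  set u : List A := word X 0 (n + 1) with hu
  have hulen : u.length = n + 1 := word_length_aux X 0 (n + 1)
  have hu0 : OccursAt X u 0 := by
    unfold OccursAt
    rw [hulen]
  -- the set of return word lengths is nonempty
  obtain ⟨g, hg⟩ := hX u ⟨0, hu0⟩
  obtain ⟨j1, hj1, _, hj1occ⟩ := hg 1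
  set S : Set ℕ := {j | 0 < j ∧ OccursAt X u j} with hS
  have hSne : S.Nonempty := ⟨j1, hj1, hj1occ⟩
  set j0 : ℕ := sInf S with hj0
  obtain ⟨hj0pos, hj0occ⟩ : 0 < j0 ∧ OccursAt X u j0 := Nat.sInf_mem hSne
  have hret : word X 0 (j0 - 0) ∈ ReturnWords X u := by
    exact ⟨0, j0, hu0, hj0occ, hj0pos, fun k hk1 hk2 hkocc =>
      absurd hk2 (not_lt.mpr (Nat.sInf_le (⟨hk1, hkocc⟩ : k ∈ S))), rfl⟩
  have hne : (List.length '' ReturnWords X u).Nonempty :=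
    ⟨(word X 0 (j0 - 0)).length, ⟨_, hret, rfl⟩⟩
  refine le_csInf hne ?_
  rintro t ⟨v, ⟨i, j, hiocc, hjocc, hij, _, hv⟩, rfl⟩
  rw [hv, word_length_aux]
  by_contra hlt
  push_neg at hlt
  set d : ℕ := j - i with hd
  have hdpos : 0 < d := by omega
  have hdL : d ∈ Finset.range (L + 1) := by
    simp only [Finset.mem_range]; omega
  have hNle : f d + d ≤ n :=
    le_trans (Finset.le_sup (f := fun d => f d + d) hdL) hn
  -- occurrences give equalities with the prefix
  have hiw : word X i (n + 1) = word X 0 (n + 1) := by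
    have := hiocc; unfold OccursAt at this; rw [hulen] at this; exact this
  have hjw : word X j (n + 1) = word X 0 (n + 1) := by
    have := hjocc; unfold OccursAt at this; rw [hulen] at this; exact this
  have h1 : X (i + (f d + d)) = X (0 + (f d + d)) :=
    word_eq_apply_aux hiw (by omega)
  have h2 : X (j + f d) = X (0 + f d) :=
    word_eq_apply_aux hjw (by omega)
  have hij' : i + (f d + d) = j + f d := by omega
  refine hfprop d hdpos ?_
  rw [← hij'] at h2
  simpa using h1.symm.trans h2

end Cobham
end
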